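/- Let T be a small countable complete linearly ordered theory satisfying the Restriction, A a finite subset of a countable saturated model M of T, and p(x) ∈ S_1(A) a non-algebraic 1-type such that CRF(p) is infinite and has no least formula on p. Let α_1, α_2 ∈ p(M) with α_1 ≠ α_2 and α_2 ∈ Ker_{p(M)}(α_1). Then the type tp(α_2/α_1) is non-principal. -/

import Mathlib

namespace Paper

open FirstOrder FirstOrder.Language Set

universe u v w x y

variable (L : FirstOrder.Language.{u, v})

/-- A theory is *small* if for every `n` it has only countably many complete `n`-types
over the empty set. -/
def IsSmall (T : L.Theory) : Prop := ∀ n : ℕ, Countable (T.CompleteType (Fin n))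

section Basic

variable {M : Type w} [L.Structure M]

/-- `M` is ω-saturated: every set of 1-formulas over finitely many parameters that is
finitely satisfiable in `M` is realized in `M`. -/
def OmegaSaturated (M : Type w) [L.Structure M] : Prop :=
  ∀ (k : ℕ) (c : Fin k → M) (S : Set (L.Formula (Fin k ⊕ Fin 1))),
    (∀ S₀ : Finset (L.Formula (Fin k ⊕ Fin 1)), ↑S₀ ⊆ S →
        ∃ a : M, ∀ φ ∈ S₀, Formula.Realize φ (Sum.elim c fun _ => a)) →
    ∃ a : M, ∀ φ ∈ S, Formula.Realize φ (Sum.elim c fun _ => a)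

/-- The complete type of a tuple over the empty parameter set (as a set of formulas). -/
def tp0 {γ : Type*} (a : γ → M) : Set (L.Formula γ) := {φ | φ.Realize a}

/-- The complete type of a tuple `a` over the parameters `c`. -/
def tpT {β γ : Type*} (c : β → M) (a : γ → M) : Set (L.Formula (β ⊕ γ)) :=
  {φ | φ.Realize (Sum.elim c a)}

/-- The complete 1-type of an element `a` over the parameters `c`. -/
def tp1 {β : Type*} (c : β → M) (a : M) : Set (L.Formula (β ⊕ Fin 1)) :=
  {φ | φ.Realize (Sum.elim c fun _ => a)}

/-- `tp(a/c)` is principal (isolated by a single formula). -/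
def IsPrincipalT {β γ : Type*} (c : β → M) (a : γ → M) : Prop :=
  ∃ φ ∈ tpT L c a, ∀ a' : γ → M,
    Formula.Realize φ (Sum.elim c a') → tpT L c a' = tpT L c a

/-- The 1-type `tp(a/c)` is principal. -/
def IsPrincipal1 {β : Type*} (c : β → M) (a : M) : Prop :=
  ∃ φ ∈ tp1 L c a, ∀ a' : M,
    Formula.Realize φ (Sum.elim c fun _ => a') → tp1 L c a' = tp1 L c a

/-- `g : B → N` is a partial elementary map (this is the meaning of "`B ⊆ N`" for a
subset `B` of another model). -/
def PartialElem {M : Type w} {N : Type x} [L.Structure M] [L.Structure N]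
    (B : Set M) (g : B → N) : Prop :=
  ∀ (n : ℕ) (φ : L.Formula (Fin n)) (b : Fin n → B),
    Formula.Realize φ (fun i => (b i : M)) ↔ Formula.Realize φ (fun i => g (b i))

/-- The finite diagram of `M` is contained in the finite diagram of `N`: every complete
type over `∅` realized in `M` is realized in `N`. -/
def FinDiagSubset (M : Type w) (N : Type x) [L.Structure M] [L.Structure N] : Prop :=
  ∀ (n : ℕ) (a : Fin n → M), ∃ b : Fin n → N, tp0 L a = tp0 L b

/-- The dowry of `B₁` is contained in the dowry of `B₂`. -/
def DowrySubset {M : Type w} [L.Structure M] (B₁ B₂ : Set M) : Prop :=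
  ∀ (n : ℕ) (b₁ : Fin n → B₁), ∃ b₂ : Fin n → B₂,
    tp0 L (fun i => (b₁ i : M)) = tp0 L (fun i => (b₂ i : M))

/-- `A` (together with the identification `e` of `B` with a subset of `A`) is a model
obtained by the construction of Theorem 2 over the countable set `B`: a countable model of
`T` containing `B` in which every finite tuple has a principal type over some finite tuple
from `B` extending any prescribed finite tuple from `B`. -/
def IsConstructedOver (T : L.Theory) {M : Type w} [L.Structure M] (B : Set M)
    (A : Type x) [L.Structure A] (e : B → A) : Prop :=
  Countable A ∧ T.Model A ∧ PartialElem L B e ∧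
    ∀ (n : ℕ) (a : Fin n → A) (k₀ : ℕ) (b₀ : Fin k₀ → B),
      ∃ (k : ℕ) (b : Fin k → B), (∀ j, ∃ i, b i = b₀ j) ∧
        IsPrincipalT L (fun i => e (b i)) a

/-- `N` is a homogeneous structure. -/
def IsHomogeneous (N : Type x) [L.Structure N] : Prop :=
  ∀ (n : ℕ) (a b : Fin n → N), tp0 L a = tp0 L b →
    ∀ c : N, ∃ d : N, tp0 L (Fin.snoc a c) = tp0 L (Fin.snoc b d)

/-- `p ⊥ʷ q`: weak orthogonality of the two types, witnessed inside the (sufficiently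
saturated) structure `N`. -/
def WeaklyOrthogonalIn (N : Type x) [L.Structure N] {k m : ℕ}
    (p : Set (L.Formula (Fin k))) (q : Set (L.Formula (Fin m))) : Prop :=
  ∀ (a₁ a₂ : Fin k → N) (b₁ b₂ : Fin m → N),
    tp0 L a₁ = p → tp0 L a₂ = p → tp0 L b₁ = q → tp0 L b₂ = q →
      tp0 L (Fin.append a₁ b₁) = tp0 L (Fin.append a₂ b₂)

end Basic

/-- `I(T, ℵ₀) = 2^{ℵ₀}`: the theory `T` has continuum many pairwise non-isomorphic
countable models. -/
def HasContinuumManyCountableModels (T : L.Theory) : Prop :=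
  ∃ f : Set ℕ → Theory.ModelType.{u, v, max u v} T,
    (∀ s, Countable (f s)) ∧
    ∀ s t : Set ℕ, s ≠ t → IsEmpty ((f s) ≃[L] (f t))

section Ordered

variable {M : Type w} [L.Structure M] [LinearOrder M]

/-- The set of realizations in `M` of the 1-type `tp(a₀/c)`. -/
def pSet {k : ℕ} (c : Fin k → M) (a₀ : M) : Set M := {x | tp1 L c x = tp1 L c a₀}

/-- `φ(x, y)` holds of `(x, y)` over the parameters `c`. -/
def real2 {k : ℕ} (c : Fin k → M) (φ : L.Formula (Fin k ⊕ Fin 2)) (x y : M) : Prop :=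
  Formula.Realize φ (Sum.elim c ![x, y])

/-- `φ(M, α)`, the set defined by `φ(x, α)`. -/
def phiSet {k : ℕ} (c : Fin k → M) (φ : L.Formula (Fin k ⊕ Fin 2)) (α : M) : Set M :=
  {x | real2 L c φ x α}

/-- `S` is convex in `B`. -/
def ConvexIn {M : Type w} [LinearOrder M] (S B : Set M) : Prop :=
  ∀ a ∈ S, ∀ b ∈ S, ∀ y ∈ B, a ≤ y → y ≤ b → y ∈ S

/-- `φ(x,y)` is a `p`-preserving formula, `p = tp(a₀/c)`. -/
def PPreserving {k : ℕ} (c : Fin k → M) (a₀ : M) (φ : L.Formula (Fin k ⊕ Fin 2)) : Prop :=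
  ∃ α ∈ pSet L c a₀, ∃ γ₁ ∈ pSet L c a₀, ∃ γ₂ ∈ pSet L c a₀,
    (pSet L c a₀ ∩ (phiSet L c φ α \ {α})).Nonempty ∧
    ∀ z ∈ phiSet L c φ α, γ₁ < z ∧ z < γ₂

/-- `φ(x,y)` is convex to the right on `p`. -/
def ConvexRight {k : ℕ} (c : Fin k → M) (a₀ : M) (φ : L.Formula (Fin k ⊕ Fin 2)) : Prop :=
  ∃ α ∈ pSet L c a₀,
    ConvexIn (pSet L c a₀ ∩ phiSet L c φ α) Set.univ ∧
    α ∈ phiSet L c φ α ∧ ∀ z ∈ phiSet L c φ α, α ≤ z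

/-- `φ(x,y)` is convex to the left on `p`. -/
def ConvexLeft {k : ℕ} (c : Fin k → M) (a₀ : M) (φ : L.Formula (Fin k ⊕ Fin 2)) : Prop :=
  ∃ α ∈ pSet L c a₀,
    ConvexIn (pSet L c a₀ ∩ phiSet L c φ α) Set.univ ∧
    α ∈ phiSet L c φ α ∧ ∀ z ∈ phiSet L c φ α, z ≤ α

/-- `φ(x,y)` is a quasi-successor on `p`. -/
def IsQuasiSuccessor {k : ℕ} (c : Fin k → M) (a₀ : M)
    (φ : L.Formula (Fin k ⊕ Fin 2)) : Prop :=
  PPreserving L c a₀ φ ∧ (ConvexRight L c a₀ φ ∨ ConvexLeft L c a₀ φ) ∧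
    ∀ α ∈ pSet L c a₀, ∀ β ∈ phiSet L c φ α ∩ pSet L c a₀,
      (pSet L c a₀ ∩ (phiSet L c φ β \ phiSet L c φ α)).Nonempty

/-- `CRF(p)`: the family of all `p`-preserving convex to the right `A`-formulas. -/
def CRF {k : ℕ} (c : Fin k → M) (a₀ : M) : Set (L.Formula (Fin k ⊕ Fin 2)) :=
  {φ | PPreserving L c a₀ φ ∧ ConvexRight L c a₀ φ}

/-- `CRF(p)` is infinite (up to equivalence on `p`, i.e. infinitely many traces). -/
def CRFInfinite {k : ℕ} (c : Fin k → M) (a₀ : M) : Prop :=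
  {g : M → Set M | ∃ φ ∈ CRF L c a₀,
    g = fun α => phiSet L c φ α ∩ pSet L c a₀}.Infinite

/-- `CRF(p)` has a greatest formula on `p`. -/
def HasGreatestCRF {k : ℕ} (c : Fin k → M) (a₀ : M) : Prop :=
  ∃ φ ∈ CRF L c a₀, ∀ ψ ∈ CRF L c a₀, ∀ α ∈ pSet L c a₀,
    phiSet L c ψ α ∩ pSet L c a₀ ⊆ phiSet L c φ α ∩ pSet L c a₀

/-- `CRF(p)` has a least formula on `p`. -/
def HasLeastCRF {k : ℕ} (c : Fin k → M) (a₀ : M) : Prop :=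
  ∃ φ ∈ CRF L c a₀, ∀ ψ ∈ CRF L c a₀, ∀ α ∈ pSet L c a₀,
    phiSet L c φ α ∩ pSet L c a₀ ⊆ phiSet L c ψ α ∩ pSet L c a₀

/-- `chain n x y` holds iff `x ∈ φⁿ(M, y)` (the `n`-fold iterate of `φ`). -/
def chain {k : ℕ} (c : Fin k → M) (φ : L.Formula (Fin k ⊕ Fin 2)) :
    ℕ → M → M → Prop
  | 0, x, y => x = y
  | n + 1, x, y => ∃ z, chain c φ n z y ∧ real2 L c φ x z

/-- The neighborhood `V_{p,φ}(α)`. -/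
def Vnb {k : ℕ} (c : Fin k → M) (a₀ : M) (φ : L.Formula (Fin k ⊕ Fin 2)) (α : M) :
    Set M :=
  {γ | γ ∈ pSet L c a₀ ∧ ∃ n : ℕ, chain L c φ n γ α ∨ chain L c φ n α γ}

/-- Every element of `S` precedes every element of `S'`. -/
def SetLT {M : Type w} [LinearOrder M] (S S' : Set M) : Prop :=
  ∀ a ∈ S, ∀ b ∈ S', a < b

/-- The set of elements strictly above every member of `S` and strictly below every
member of `S'`. -/
def betweenSets {M : Type w} [LinearOrder M] (S S' : Set M) : Set M :=
  {y | (∀ a ∈ S, a < y) ∧ ∀ b ∈ S', y < b}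

/-- The convex closure `φᶜ(M)` of the set defined by a 1-formula `φ` over parameters `c`. -/
def convCl {β : Type*} (c : β → M) (φ : L.Formula (β ⊕ Fin 1)) : Set M :=
  {y | ∃ y₁ y₂ : M, Formula.Realize φ (Sum.elim c fun _ => y₁) ∧
    Formula.Realize φ (Sum.elim c fun _ => y₂) ∧ y₁ ≤ y ∧ y ≤ y₂}

/-- The convex type `tpᶜ(a/c)`, encoded as the set of 1-formulas `φ` over `c` whose
convex closure contains `a`. -/
def tpc {β : Type*} (c : β → M) (a : M) : Set (L.Formula (β ⊕ Fin 1)) :=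
  {φ | a ∈ convCl L c φ}

/-- The set of realizations in `M` of the convex type `tpᶜ(a/c)`. -/
def tpcRealizers {β : Type*} (c : β → M) (a : M) : Set M :=
  {y | ∀ φ ∈ tp1 L c a, y ∈ convCl L c φ}

/-- `(α, β)` realizes the partial type `q₀(x, y)` associated with the quasi-successor `φ`. -/
def RealizesQ0 {k : ℕ} (c : Fin k → M) (a₀ : M) (φ : L.Formula (Fin k ⊕ Fin 2))
    (α β : M) : Prop :=
  α < β ∧ α ∈ pSet L c a₀ ∧ β ∈ pSet L c a₀ ∧
  (∀ n : ℕ, ¬ chain L c φ n β α) ∧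
  (∀ R : L.Formula (Fin k ⊕ Fin 2),
    (PPreserving L c a₀ R ∧ ConvexRight L c a₀ R ∧
      ∀ n : ℕ, ∀ α' ∈ pSet L c a₀, ∀ γ ∈ pSet L c a₀,
        chain L c φ n γ α' → γ ∈ phiSet L c R α') →
    real2 L c R β α) ∧
  (∀ Lf : L.Formula (Fin k ⊕ Fin 2),
    (PPreserving L c a₀ Lf ∧ ConvexLeft L c a₀ Lf ∧
      ∀ n : ℕ, ∀ β' ∈ pSet L c a₀, ∀ γ ∈ pSet L c a₀,
        chain L c φ n β' γ → γ ∈ phiSet L c Lf β') →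
    real2 L c Lf α β)

/-- The neighborhood `V_{p(M)}(α)` built from all of `CRF(p)`. -/
def VCRF {k : ℕ} (c : Fin k → M) (a₀ : M) (α : M) : Set M :=
  {γ | γ ∈ pSet L c a₀ ∧ ∃ φ ∈ CRF L c a₀, real2 L c φ α γ ∨ real2 L c φ γ α}

/-- `ε_{φ,Θ}(M, α) = (φ(α,·) ∨ φ(·,α)) ∩ Θ(M)`. -/
def epsSet {k : ℕ} (c : Fin k → M) (θ : L.Formula (Fin k ⊕ Fin 1))
    (φ : L.Formula (Fin k ⊕ Fin 2)) (α : M) : Set M :=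
  {y | (real2 L c φ α y ∨ real2 L c φ y α) ∧
    Formula.Realize θ (Sum.elim c fun _ => y)}

/-- `Θ ∈ p` is a formula with `p(M) = pᶜ(M) ∩ Θ(M)`. -/
def ThetaWitness {k : ℕ} (c : Fin k → M) (a₀ : M) (θ : L.Formula (Fin k ⊕ Fin 1)) :
    Prop :=
  pSet L c a₀ =
    tpcRealizers L c a₀ ∩ {y | Formula.Realize θ (Sum.elim c fun _ => y)}

/-- The kernel `Ker_{p(M)}(α) = ⋂_{φ ∈ CRF(p)} ε_{φ,Θ}(M, α)`. -/
def KerSet {k : ℕ} (c : Fin k → M) (a₀ : M) (θ : L.Formula (Fin k ⊕ Fin 1)) (α : M) :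
    Set M :=
  ⋂ φ ∈ CRF L c a₀, epsSet L c θ φ α

/-- The formulas of `CRF(p)` strictly smaller than `ψ` on `p`. -/
def SmallerCRF {k : ℕ} (c : Fin k → M) (a₀ : M) (ψ : L.Formula (Fin k ⊕ Fin 2)) :
    Set (L.Formula (Fin k ⊕ Fin 2)) :=
  {φ ∈ CRF L c a₀ | ∃ α ∈ pSet L c a₀,
    phiSet L c φ α ∩ pSet L c a₀ ⊂ phiSet L c ψ α ∩ pSet L c a₀}

/-- The formulas of `CRF(p)` strictly greater than `ψ` on `p`. -/
def LargerCRF {k : ℕ} (c : Fin k → M) (a₀ : M) (ψ : L.Formula (Fin k ⊕ Fin 2)) :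
    Set (L.Formula (Fin k ⊕ Fin 2)) :=
  {φ ∈ CRF L c a₀ | ∃ α ∈ pSet L c a₀,
    phiSet L c ψ α ∩ pSet L c a₀ ⊂ phiSet L c φ α ∩ pSet L c a₀}

/-- `V^ψ_{p(M)}(α)`. -/
def Vpsi {k : ℕ} (c : Fin k → M) (a₀ : M) (θ : L.Formula (Fin k ⊕ Fin 1))
    (ψ : L.Formula (Fin k ⊕ Fin 2)) (α : M) : Set M :=
  ⋃ φ ∈ SmallerCRF L c a₀ ψ, epsSet L c θ φ α

/-- `Ker^ψ_{p(M)}(α)`. -/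
def Kerpsi {k : ℕ} (c : Fin k → M) (a₀ : M) (θ : L.Formula (Fin k ⊕ Fin 1))
    (ψ : L.Formula (Fin k ⊕ Fin 2)) (α : M) : Set M :=
  ⋂ φ ∈ LargerCRF L c a₀ ψ, epsSet L c θ φ α

/-- `φ(x,y)` is equivalence-generating (for convex-to-the-right formulas). -/
def EquivGenR {k : ℕ} (c : Fin k → M) (a₀ : M) (φ : L.Formula (Fin k ⊕ Fin 2)) : Prop :=
  ∀ α ∈ pSet L c a₀, ∀ β ∈ phiSet L c φ α ∩ pSet L c a₀,
    ∀ y : M, β ≤ y → (y ∈ phiSet L c φ α ↔ y ∈ phiSet L c φ β)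

/-- `φ(x,y)` is equivalence-generating (for convex-to-the-left formulas). -/
def EquivGenL {k : ℕ} (c : Fin k → M) (a₀ : M) (φ : L.Formula (Fin k ⊕ Fin 2)) : Prop :=
  ∀ α ∈ pSet L c a₀, ∀ β ∈ phiSet L c φ α ∩ pSet L c a₀,
    ∀ y : M, y ≤ β → (y ∈ phiSet L c φ α ↔ y ∈ phiSet L c φ β)

/-- The relation defined by the formula `E(x, y, b̄)` over parameters `c`. -/
def Erel {k m : ℕ} (c : Fin k → M) (E : L.Formula (Fin k ⊕ (Fin 2 ⊕ Fin m)))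
    (b : Fin m → M) (x y : M) : Prop :=
  Formula.Realize E (Sum.elim c (Sum.elim ![x, y] b))

/-- `r` is an equivalence relation on `P`. -/
def IsEquivOn {M : Type w} (r : M → M → Prop) (P : Set M) : Prop :=
  (∀ x ∈ P, r x x) ∧ (∀ x ∈ P, ∀ y ∈ P, r x y → r y x) ∧
    (∀ x ∈ P, ∀ y ∈ P, ∀ z ∈ P, r x y → r y z → r x z)

/-- The `r`-classes are convex in `P`. -/
def ClassesConvexIn {M : Type w} [LinearOrder M] (r : M → M → Prop) (P : Set M) : Prop :=
  ∀ x ∈ P, ConvexIn {y | y ∈ P ∧ r x y} P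

/-- The `r`-classes are mutually dense in `P`. -/
def ClassesMutuallyDense {M : Type w} [LinearOrder M] (r : M → M → Prop) (P : Set M) :
    Prop :=
  ∀ x ∈ P, ∀ y ∈ P, ¬ r x y →
    ∀ u ∈ P, ∀ v ∈ P, r x u → r x v → u < v → ∃ w ∈ P, r y w ∧ u < w ∧ w < v

/-- Every `r`-class is partitioned into infinitely many infinite `r'`-classes. -/
def RefinedIntoInfinitelyMany {M : Type w} (r r' : M → M → Prop) (P : Set M) : Prop :=
  (∀ x ∈ P, ∀ y ∈ P, r' x y → r x y) ∧
  (∀ x ∈ P, ∀ y ∈ P, r x y → {z | z ∈ P ∧ r' y z}.Infinite) ∧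
  ∀ x ∈ P, {C : Set M | ∃ y, y ∈ P ∧ r x y ∧ C = {z | z ∈ P ∧ r' y z}}.Infinite

/-- The Restriction on the (linearly ordered) theory of `M`. -/
def SatisfiesRestriction (M : Type w) [L.Structure M] [LinearOrder M] : Prop :=
  ∀ (k : ℕ) (c : Fin k → M) (a₀ : M),
    (∀ (m : ℕ) (E : L.Formula (Fin k ⊕ (Fin 2 ⊕ Fin m))) (bs : ℕ → Fin m → M),
        ¬ ∀ i : ℕ,
            IsEquivOn (Erel L c E (bs i)) (pSet L c a₀) ∧
            ClassesConvexIn (Erel L c E (bs i)) (pSet L c a₀) ∧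
            ClassesMutuallyDense (Erel L c E (bs i)) (pSet L c a₀) ∧
            RefinedIntoInfinitelyMany (Erel L c E (bs i)) (Erel L c E (bs (i + 1)))
              (pSet L c a₀)) ∧
    {q : Set (L.Formula (Fin k ⊕ Fin 1)) | ∃ y : M,
      tpc L c y = tpc L c a₀ ∧ q = tp1 L c y}.Finite ∧
    ∀ φ : L.Formula (Fin k ⊕ Fin 2),
      (PPreserving L c a₀ φ → ConvexRight L c a₀ φ → EquivGenR L c a₀ φ) ∧
      (PPreserving L c a₀ φ → ConvexLeft L c a₀ φ → EquivGenL L c a₀ φ)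

/-- `M₀` is a prime model (of the complete theory of `M`) over the finite tuple `xs`:
it is a countable atomic elementary substructure of `M` containing `xs`. -/
def IsPrimeOver (M₀ : L.ElementarySubstructure M) {r : ℕ} (xs : Fin r → M) : Prop :=
  (∀ i, xs i ∈ M₀) ∧ Countable M₀ ∧
    ∀ (n : ℕ) (a : Fin n → M₀), IsPrincipalT L xs (fun i => (a i : M))

/-- The 1-type `p = tp(a₀/c)` is extremely trivial. -/
def ExtremelyTrivial {k : ℕ} (c : Fin k → M) (a₀ : M) : Prop :=
  ∀ n : ℕ, 1 ≤ n → ∀ βs : Fin n → M, (∀ i, βs i ∈ pSet L c a₀) →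
    ∀ M₀ : L.ElementarySubstructure M, IsPrimeOver L M₀ (Fin.append c βs) →
      {y | y ∈ pSet L c a₀ ∧ y ∈ M₀} = Set.range βs

end Ordered

section Combinators
variable {L : FirstOrder.Language.{u, v}} {M : Type w} [L.Structure M]
variable {k : ℕ} {A : Type x} {B : Type y}

/-- Apply a 2-variable formula over parameters `Fin k` at two positions in context `A ⊕ B`. -/
noncomputable def app2g (φ : L.Formula (Fin k ⊕ Fin 2)) (emb : Fin k → A) (t : Fin 2 → A ⊕ B) :
    L.Formula (A ⊕ B) :=
  φ.relabel (Sum.elim (fun i => Sum.inl (emb i)) t)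

lemma realize_app2g {φ : L.Formula (Fin k ⊕ Fin 2)} {emb : Fin k → A} {t : Fin 2 → A ⊕ B}
    {v : A ⊕ B → M} :
    (app2g φ emb t).Realize v ↔
      φ.Realize (Sum.elim (fun i => v (Sum.inl (emb i))) ![v (t 0), v (t 1)]) := by
  rw [app2g, Formula.realize_relabel]
  apply iff_of_eq; congr 1
  funext a
  rcases a with i | b
  · rfl
  · fin_cases b <;> simp

/-- Apply a 1-variable formula over parameters `Fin k` at one position in context `A ⊕ B`. -/
noncomputable def app1g (φ : L.Formula (Fin k ⊕ Fin 1)) (emb : Fin k → A) (t : A ⊕ B) :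
    L.Formula (A ⊕ B) :=
  φ.relabel (Sum.elim (fun i => Sum.inl (emb i)) (fun _ => t))

lemma realize_app1g {φ : L.Formula (Fin k ⊕ Fin 1)} {emb : Fin k → A} {t : A ⊕ B}
    {v : A ⊕ B → M} :
    (app1g φ emb t).Realize v ↔
      φ.Realize (Sum.elim (fun i => v (Sum.inl (emb i))) (fun _ => v t)) := by
  rw [app1g, Formula.realize_relabel]
  apply iff_of_eq; congr 1
  funext a
  rcases a with i | b <;> rfl

variable [L.IsOrdered]

/-- `t₀ ≤ t₁` as a formula in context `A ⊕ B`. -/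
def leg (t₀ t₁ : A ⊕ B) : L.Formula (A ⊕ B) :=
  Term.le (Term.var (Sum.inl t₀)) (Term.var (Sum.inl t₁))

/-- `t₀ < t₁` as a formula in context `A ⊕ B`. -/
def ltg (t₀ t₁ : A ⊕ B) : L.Formula (A ⊕ B) :=
  Term.lt (Term.var (Sum.inl t₀)) (Term.var (Sum.inl t₁))

lemma realize_leg [LE M] [L.OrderedStructure M] {t₀ t₁ : A ⊕ B} {v : A ⊕ B → M} :
    (leg (L := L) t₀ t₁).Realize v ↔ v t₀ ≤ v t₁ := by
  rw [leg, Formula.Realize, Term.realize_le] <;> simp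

lemma realize_ltg [Preorder M] [L.OrderedStructure M] {t₀ t₁ : A ⊕ B} {v : A ⊕ B → M} :
    (ltg (L := L) t₀ t₁).Realize v ↔ v t₀ < v t₁ := by
  rw [ltg, Formula.Realize, Term.realize_lt] <;> simp

/-- Conjunction of a list of formulas. -/
noncomputable def conjList : List (L.Formula A) → L.Formula A
  | [] => ⊤
  | φ :: l => φ ⊓ conjList l

lemma realize_conjList {l : List (L.Formula A)} {v : A → M} :
    (conjList l).Realize v ↔ ∀ φ ∈ l, φ.Realize v := by
  induction l with
  | nil => simp [conjList, Formula.Realize]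
  | cons φ l ih => simp [conjList, Formula.realize_inf, ih]

end Combinators

section Quant
variable {L : FirstOrder.Language.{u, v}} {M : Type w} [L.Structure M] {A : Type x} {n : ℕ}

/-- Extend a valuation on `A ⊕ Fin n` by one more element at the last position. -/
def extV (v : A ⊕ Fin n → M) (z : M) : A ⊕ Fin (n + 1) → M :=
  Sum.elim (fun a => v (Sum.inl a)) (Fin.snoc (fun j => v (Sum.inr j)) z)

@[simp] lemma extV_inl (v : A ⊕ Fin n → M) (z : M) (a : A) :
    extV v z (Sum.inl a) = v (Sum.inl a) := rfl
@[simp] lemma extV_castSucc (v : A ⊕ Fin n → M) (z : M) (j : Fin n) :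
    extV v z (Sum.inr j.castSucc) = v (Sum.inr j) := by simp [extV]
@[simp] lemma extV_last (v : A ⊕ Fin n → M) (z : M) :
    extV v z (Sum.inr (Fin.last n)) = z := by simp [extV]

/-- Existential quantification of the last variable. -/
noncomputable def quantE (Φ : L.Formula (A ⊕ Fin (n + 1))) : L.Formula (A ⊕ Fin n) :=
  (Φ.relabel
    (Sum.elim (fun a => Sum.inl (Sum.inl a))
      (fun j => Fin.lastCases (Sum.inr 0) (fun j' => Sum.inl (Sum.inr j')) j))).iExs (Fin 1)

/-- Universal quantification of the last variable. -/
noncomputable def quantA (Φ : L.Formula (A ⊕ Fin (n + 1))) : L.Formula (A ⊕ Fin n) :=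
  (Φ.relabel
    (Sum.elim (fun a => Sum.inl (Sum.inl a))
      (fun j => Fin.lastCases (Sum.inr 0) (fun j' => Sum.inl (Sum.inr j')) j))).iAlls (Fin 1)

lemma realize_quantE {Φ : L.Formula (A ⊕ Fin (n + 1))} {v : A ⊕ Fin n → M} :
    (quantE Φ).Realize v ↔ ∃ z : M, Φ.Realize (extV v z) := by
  rw [quantE, Formula.realize_iExs]
  simp only [Formula.realize_relabel]
  constructor
  · rintro ⟨i, hi⟩
    refine ⟨i 0, ?_⟩
    convert hi using 1
    funext a
    rcases a with a | j
    · rfl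
    · refine Fin.lastCases ?_ (fun j' => ?_) j <;> simp
  · rintro ⟨z, hz⟩
    refine ⟨fun _ => z, ?_⟩
    convert hz using 1
    funext a
    rcases a with a | j
    · rfl
    · refine Fin.lastCases ?_ (fun j' => ?_) j <;> simp

lemma realize_quantA {Φ : L.Formula (A ⊕ Fin (n + 1))} {v : A ⊕ Fin n → M} :
    (quantA Φ).Realize v ↔ ∀ z : M, Φ.Realize (extV v z) := by
  rw [quantA, Formula.realize_iAlls]
  simp only [Formula.realize_relabel]
  constructor
  · intro h z
    have := h (fun _ => z)
    convert this using 1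
    funext a
    rcases a with a | j
    · rfl
    · refine Fin.lastCases ?_ (fun j' => ?_) j <;> simp
  · intro h i
    have := h (i 0)
    convert this using 1
    funext a
    rcases a with a | j
    · rfl
    · refine Fin.lastCases ?_ (fun j' => ?_) j <;> simp

end Quant

set_option linter.unusedSectionVars false

section MainAux
variable {L : FirstOrder.Language.{u, v}} [IsOrdered L]
variable {M : Type w} [L.Structure M] [LinearOrder M] [L.OrderedStructure M]
variable {k : ℕ}

/-- Realization of a 1-variable formula over `c` at `y`. -/
def r1 (c : Fin k → M) (F : L.Formula (Fin k ⊕ Fin 1)) (y : M) : Prop :=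
  F.Realize (Sum.elim c fun _ => y)

variable {c : Fin k → M} {a₀ : M} {θ : L.Formula (Fin k ⊕ Fin 1)}

/-- `γ` belongs to the type `p = tp(a₀/c)`. -/
def pFor (c : Fin k → M) (a₀ : M) (γ : L.Formula (Fin k ⊕ Fin 1)) : Prop := r1 c γ a₀

lemma mem_pSet_iff {y : M} : y ∈ pSet L c a₀ ↔ ∀ F : L.Formula (Fin k ⊕ Fin 1),
    (r1 c F y ↔ r1 c F a₀) := by
  simp only [pSet, Set.mem_setOf_eq, Set.ext_iff, tp1]
  rfl

lemma a₀_mem_pSet : a₀ ∈ pSet L c a₀ := by simp [pSet]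

lemma transfer1 {y : M} (hy : y ∈ pSet L c a₀) (F : L.Formula (Fin k ⊕ Fin 1)) :
    r1 c F y ↔ r1 c F a₀ := mem_pSet_iff.1 hy F

lemma r1_of_pFor {y : M} (hy : y ∈ pSet L c a₀) {γ : L.Formula (Fin k ⊕ Fin 1)}
    (hγ : pFor c a₀ γ) : r1 c γ y := (transfer1 hy γ).2 hγ

lemma pmem_of_allp {g : M} (h : ∀ γ : L.Formula (Fin k ⊕ Fin 1), pFor c a₀ γ → r1 c γ g) :
    g ∈ pSet L c a₀ := by
  rw [mem_pSet_iff]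
  intro F
  constructor
  · intro hFg
    by_contra hF
    have h2 := h F.not (by simpa [pFor, r1, Formula.realize_not] using hF)
    rw [r1, Formula.realize_not] at h2
    exact h2 hFg
  · exact h F

/-- `θ` holds at `y`. -/
def Th (c : Fin k → M) (θ : L.Formula (Fin k ⊕ Fin 1)) (y : M) : Prop := r1 c θ y

lemma Th_of_pmem (hθw : ThetaWitness L c a₀ θ) {y : M} (hy : y ∈ pSet L c a₀) :
    Th c θ y := by
  have := hθw ▸ hy
  exact this.2

lemma pFor_theta (hθw : ThetaWitness L c a₀ θ) : pFor c a₀ θ :=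
  Th_of_pmem hθw a₀_mem_pSet

lemma pmem_sandwich (hθw : ThetaWitness L c a₀ θ) {a u : M} (ha : a ∈ pSet L c a₀)
    (hau : a ≤ u) (hTu : Th c θ u)
    (hup : ∀ γ : L.Formula (Fin k ⊕ Fin 1), pFor c a₀ γ → ∃ g, r1 c γ g ∧ u ≤ g) :
    u ∈ pSet L c a₀ := by
  rw [hθw]
  refine ⟨?_, hTu⟩
  intro φ hφ
  obtain ⟨g, hg, hug⟩ := hup φ hφ
  exact ⟨a, g, r1_of_pFor ha hφ, hg, hau, hug⟩

lemma pmem_between (hθw : ThetaWitness L c a₀ θ) {a b u : M} (ha : a ∈ pSet L c a₀)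
    (hb : b ∈ pSet L c a₀) (hau : a ≤ u) (hub : u ≤ b) (hTu : Th c θ u) :
    u ∈ pSet L c a₀ :=
  pmem_sandwich hθw ha hau hTu (fun γ hγ => ⟨b, r1_of_pFor hb hγ, hub⟩)

end MainAux

section Formulas
variable {L : FirstOrder.Language.{u, v}} [IsOrdered L]
variable {M : Type w} [L.Structure M] [LinearOrder M] [L.OrderedStructure M]
variable {k : ℕ}

/-- "ψ(y,y) ∧ ∀z(ψ(z,y) → y ≤ z)" -/
noncomputable def FT1 (ψ : L.Formula (Fin k ⊕ Fin 2)) : L.Formula (Fin k ⊕ Fin 1) :=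
  app2g ψ id ![Sum.inr 0, Sum.inr 0] ⊓
  quantA (app2g ψ id ![Sum.inr (Fin.last 1), Sum.inr ((0 : Fin 1).castSucc)] ⟹
    leg (Sum.inr ((0 : Fin 1).castSucc)) (Sum.inr (Fin.last 1)))

lemma realize_FT1 {c : Fin k → M} {ψ : L.Formula (Fin k ⊕ Fin 2)} {α : M} :
    r1 c (FT1 ψ) α ↔ (real2 L c ψ α α ∧ ∀ z, real2 L c ψ z α → α ≤ z) := by
  simp only [r1, real2, FT1, Formula.realize_inf, Formula.realize_imp, realize_app2g,
    realize_leg, realize_quantA, extV_inl, extV_castSucc, extV_last, Matrix.cons_val_zero,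
    Matrix.cons_val_one, Matrix.head_cons, Sum.elim_inl, Sum.elim_inr, id]

/-- The convexity-transfer formula `D`. -/
noncomputable def FD (θ δ : L.Formula (Fin k ⊕ Fin 1)) (ψ : L.Formula (Fin k ⊕ Fin 2)) :
    L.Formula (Fin k ⊕ Fin 1) :=
  quantA (quantA (quantA (
    (((app1g δ id (Sum.inr (((Fin.last 1).castSucc).castSucc)) ⊓
       app1g θ id (Sum.inr (((Fin.last 1).castSucc).castSucc)) ⊓
       app2g ψ id ![Sum.inr (((Fin.last 1).castSucc).castSucc),
         Sum.inr ((((0 : Fin 1).castSucc).castSucc).castSucc)]) ⊓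
      (app1g δ id (Sum.inr ((Fin.last 2).castSucc)) ⊓
       app1g θ id (Sum.inr ((Fin.last 2).castSucc)) ⊓
       app2g ψ id ![Sum.inr ((Fin.last 2).castSucc),
         Sum.inr ((((0 : Fin 1).castSucc).castSucc).castSucc)])) ⊓
      (leg (Sum.inr (((Fin.last 1).castSucc).castSucc)) (Sum.inr (Fin.last 3)) ⊓
       leg (Sum.inr (Fin.last 3)) (Sum.inr ((Fin.last 2).castSucc)))) ⟹
    (app1g θ id (Sum.inr (Fin.last 3)) ⊓
     app2g ψ id ![Sum.inr (Fin.last 3),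
       Sum.inr ((((0 : Fin 1).castSucc).castSucc).castSucc)]))))

lemma realize_FD {c : Fin k → M} {θ δ : L.Formula (Fin k ⊕ Fin 1)}
    {ψ : L.Formula (Fin k ⊕ Fin 2)} {α : M} :
    r1 c (FD θ δ ψ) α ↔ ∀ a b u : M,
      (r1 c δ a ∧ Th c θ a ∧ real2 L c ψ a α) →
      (r1 c δ b ∧ Th c θ b ∧ real2 L c ψ b α) →
      a ≤ u → u ≤ b → (Th c θ u ∧ real2 L c ψ u α) := by
  simp only [r1, real2, Th, FD, Formula.realize_inf, Formula.realize_imp, realize_app2g,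
    realize_app1g, realize_leg, realize_quantA, extV_inl, extV_castSucc, extV_last,
    Matrix.cons_val_zero, Matrix.cons_val_one, Matrix.head_cons, Sum.elim_inl, Sum.elim_inr, id]
  constructor
  · intro h a b u ha hb hau hub
    exact h a b u (by tauto)
  · intro h a b u hh
    exact h a b u (by tauto) (by tauto) (by tauto) (by tauto)

/-- "∃g (γ(g) ∧ θ(g) ∧ ∀u (ψ₀(u,y) → u < g))" -/
noncomputable def FUB (θ γ : L.Formula (Fin k ⊕ Fin 1)) (ψ₀ : L.Formula (Fin k ⊕ Fin 2)) :
    L.Formula (Fin k ⊕ Fin 1) :=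
  quantE ((app1g γ id (Sum.inr (Fin.last 1)) ⊓ app1g θ id (Sum.inr (Fin.last 1))) ⊓
    quantA (app2g ψ₀ id ![Sum.inr (Fin.last 2),
        Sum.inr (((0 : Fin 1).castSucc).castSucc)] ⟹
      ltg (Sum.inr (Fin.last 2)) (Sum.inr ((Fin.last 1).castSucc))))

lemma realize_FUB {c : Fin k → M} {θ γ : L.Formula (Fin k ⊕ Fin 1)}
    {ψ₀ : L.Formula (Fin k ⊕ Fin 2)} {α : M} :
    r1 c (FUB θ γ ψ₀) α ↔ ∃ g, r1 c γ g ∧ Th c θ g ∧ ∀ u, real2 L c ψ₀ u α → u < g := by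
  simp only [r1, real2, Th, FUB, Formula.realize_inf, Formula.realize_imp, realize_app2g,
    realize_app1g, realize_leg, realize_ltg, realize_quantA, realize_quantE, extV_inl,
    extV_castSucc, extV_last, Matrix.cons_val_zero, Matrix.cons_val_one, Matrix.head_cons,
    Sum.elim_inl, Sum.elim_inr, id]
  tauto

/-- "∃g (γ(g) ∧ θ(g) ∧ g < y)" -/
noncomputable def FLB (θ γ : L.Formula (Fin k ⊕ Fin 1)) : L.Formula (Fin k ⊕ Fin 1) :=
  quantE ((app1g γ id (Sum.inr (Fin.last 1)) ⊓ app1g θ id (Sum.inr (Fin.last 1))) ⊓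
    ltg (Sum.inr (Fin.last 1)) (Sum.inr ((0 : Fin 1).castSucc)))

lemma realize_FLB {c : Fin k → M} {θ γ : L.Formula (Fin k ⊕ Fin 1)} {α : M} :
    r1 c (FLB θ γ) α ↔ ∃ g, r1 c γ g ∧ Th c θ g ∧ g < α := by
  simp only [r1, Th, FLB, Formula.realize_inf, realize_app1g, realize_ltg, realize_quantE,
    extV_inl, extV_castSucc, extV_last, Sum.elim_inl, Sum.elim_inr, id]
  tauto

/-- "∀z (χ(z,y) → γ(z))" -/
noncomputable def FMem (χ : L.Formula (Fin k ⊕ Fin 2)) (γ : L.Formula (Fin k ⊕ Fin 1)) :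
    L.Formula (Fin k ⊕ Fin 1) :=
  quantA (app2g χ id ![Sum.inr (Fin.last 1), Sum.inr ((0 : Fin 1).castSucc)] ⟹
    app1g γ id (Sum.inr (Fin.last 1)))

lemma realize_FMem {c : Fin k → M} {χ : L.Formula (Fin k ⊕ Fin 2)}
    {γ : L.Formula (Fin k ⊕ Fin 1)} {α : M} :
    r1 c (FMem χ γ) α ↔ ∀ z, real2 L c χ z α → r1 c γ z := by
  simp only [r1, real2, FMem, Formula.realize_imp, realize_app2g, realize_app1g,
    realize_quantA, extV_inl, extV_castSucc, extV_last, Matrix.cons_val_zero,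
    Matrix.cons_val_one, Matrix.head_cons, Sum.elim_inl, Sum.elim_inr, id]

/-- "∀z (χ(z,y) → ψ(y,z) ∨ ψ(z,y))" -/
noncomputable def FEps (χ ψ : L.Formula (Fin k ⊕ Fin 2)) : L.Formula (Fin k ⊕ Fin 1) :=
  quantA (app2g χ id ![Sum.inr (Fin.last 1), Sum.inr ((0 : Fin 1).castSucc)] ⟹
    (app2g ψ id ![Sum.inr ((0 : Fin 1).castSucc), Sum.inr (Fin.last 1)] ⊔
     app2g ψ id ![Sum.inr (Fin.last 1), Sum.inr ((0 : Fin 1).castSucc)]))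

lemma realize_FEps {c : Fin k → M} {χ ψ : L.Formula (Fin k ⊕ Fin 2)} {α : M} :
    r1 c (FEps χ ψ) α ↔ ∀ z, real2 L c χ z α → (real2 L c ψ α z ∨ real2 L c ψ z α) := by
  simp only [r1, real2, FEps, Formula.realize_imp, Formula.realize_sup, realize_app2g,
    realize_quantA, extV_inl, extV_castSucc, extV_last, Matrix.cons_val_zero,
    Matrix.cons_val_one, Matrix.head_cons, Sum.elim_inl, Sum.elim_inr, id]

/-- The 2-variable version of the isolating formula. -/
noncomputable def chi2 (χ : L.Formula ((Fin k ⊕ Fin 1) ⊕ Fin 1)) : L.Formula (Fin k ⊕ Fin 2) :=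
  χ.relabel (Sum.elim (Sum.elim (fun i => Sum.inl i) (fun _ => Sum.inr 1)) (fun _ => Sum.inr 0))

lemma realize_chi2 {c : Fin k → M} {χ : L.Formula ((Fin k ⊕ Fin 1) ⊕ Fin 1)} {z t : M} :
    real2 L c (chi2 χ) z t ↔ χ.Realize (Sum.elim (Sum.elim c fun _ => t) fun _ => z) := by
  rw [real2, chi2, Formula.realize_relabel]
  apply iff_of_eq; congr 1
  funext a
  rcases a with (i | b) | b
  · rfl
  · simp
  · simp

/-- Case A strengthened isolating formula: `χ₂(u,v) ∧ v < u ∧ θ(u) ∧ ψ₀(u,v)`. -/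
noncomputable def chiA (χ₂ ψ₀ : L.Formula (Fin k ⊕ Fin 2)) (θ : L.Formula (Fin k ⊕ Fin 1)) :
    L.Formula (Fin k ⊕ Fin 2) :=
  ((χ₂ ⊓ ltg (Sum.inr 1) (Sum.inr 0)) ⊓ app1g θ id (Sum.inr 0)) ⊓ ψ₀

lemma realize_chiA {c : Fin k → M} {χ₂ ψ₀ : L.Formula (Fin k ⊕ Fin 2)}
    {θ : L.Formula (Fin k ⊕ Fin 1)} {x y : M} :
    real2 L c (chiA χ₂ ψ₀ θ) x y ↔
      real2 L c χ₂ x y ∧ y < x ∧ Th c θ x ∧ real2 L c ψ₀ x y := by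
  simp only [real2, Th, r1, chiA, Formula.realize_inf, realize_app1g, realize_ltg,
    Matrix.cons_val_zero, Matrix.cons_val_one, Matrix.head_cons, Sum.elim_inl, Sum.elim_inr, id]
  tauto

/-- Case B strengthened isolating formula: `χ₂(u,v) ∧ u < v ∧ θ(v) ∧ ψ₀(v,u)`. -/
noncomputable def chiB (χ₂ ψ₀ : L.Formula (Fin k ⊕ Fin 2)) (θ : L.Formula (Fin k ⊕ Fin 1)) :
    L.Formula (Fin k ⊕ Fin 2) :=
  ((χ₂ ⊓ ltg (Sum.inr 0) (Sum.inr 1)) ⊓ app1g θ id (Sum.inr 1)) ⊓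
    app2g ψ₀ id ![Sum.inr 1, Sum.inr 0]

lemma realize_chiB {c : Fin k → M} {χ₂ ψ₀ : L.Formula (Fin k ⊕ Fin 2)}
    {θ : L.Formula (Fin k ⊕ Fin 1)} {x y : M} :
    real2 L c (chiB χ₂ ψ₀ θ) x y ↔
      real2 L c χ₂ x y ∧ x < y ∧ Th c θ y ∧ real2 L c ψ₀ y x := by
  simp only [real2, Th, r1, chiB, Formula.realize_inf, realize_app1g, realize_app2g,
    realize_ltg, Matrix.cons_val_zero, Matrix.cons_val_one, Matrix.head_cons,
    Sum.elim_inl, Sum.elim_inr, id]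
  tauto

/-- Case A candidate least formula: `y ≤ x ∧ ∃w (ξ(w,y) ∧ x ≤ w)`. -/
noncomputable def phiA (ξ : L.Formula (Fin k ⊕ Fin 2)) : L.Formula (Fin k ⊕ Fin 2) :=
  leg (Sum.inr 1) (Sum.inr 0) ⊓
  quantE (app2g ξ id ![Sum.inr (Fin.last 2), Sum.inr ((1 : Fin 2).castSucc)] ⊓
    leg (Sum.inr ((0 : Fin 2).castSucc)) (Sum.inr (Fin.last 2)))

lemma realize_phiA {c : Fin k → M} {ξ : L.Formula (Fin k ⊕ Fin 2)} {x y : M} :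
    real2 L c (phiA ξ) x y ↔ y ≤ x ∧ ∃ w, real2 L c ξ w y ∧ x ≤ w := by
  simp only [real2, phiA, Formula.realize_inf, realize_app2g, realize_leg, realize_quantE,
    extV_inl, extV_castSucc, extV_last, Matrix.cons_val_zero, Matrix.cons_val_one,
    Matrix.head_cons, Sum.elim_inl, Sum.elim_inr, id]

/-- Case B candidate least formula: `y ≤ x ∧ ∃w (ξ(y,w) ∧ x ≤ w)`. -/
noncomputable def phiB (ξ : L.Formula (Fin k ⊕ Fin 2)) : L.Formula (Fin k ⊕ Fin 2) :=
  leg (Sum.inr 1) (Sum.inr 0) ⊓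
  quantE (app2g ξ id ![Sum.inr ((1 : Fin 2).castSucc), Sum.inr (Fin.last 2)] ⊓
    leg (Sum.inr ((0 : Fin 2).castSucc)) (Sum.inr (Fin.last 2)))

lemma realize_phiB {c : Fin k → M} {ξ : L.Formula (Fin k ⊕ Fin 2)} {x y : M} :
    real2 L c (phiB ξ) x y ↔ y ≤ x ∧ ∃ w, real2 L c ξ y w ∧ x ≤ w := by
  simp only [real2, phiB, Formula.realize_inf, realize_app2g, realize_leg, realize_quantE,
    extV_inl, extV_castSucc, extV_last, Matrix.cons_val_zero, Matrix.cons_val_one,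
    Matrix.head_cons, Sum.elim_inl, Sum.elim_inr, id]

/-- Lift a 1-variable `c`-formula to the context with one extra parameter. -/
noncomputable def liftI (γ : L.Formula (Fin k ⊕ Fin 1)) :
    L.Formula ((Fin k ⊕ Fin 1) ⊕ Fin 1) :=
  app1g γ Sum.inl (Sum.inr 0)

lemma realize_liftI {c : Fin k → M} {γ : L.Formula (Fin k ⊕ Fin 1)} {t z : M} :
    (liftI γ).Realize (Sum.elim (Sum.elim c fun _ => t) fun _ => z) ↔ r1 c γ z := by
  simp only [liftI, r1, realize_app1g, Sum.elim_inl, Sum.elim_inr]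

/-- Lift a 2-variable `c`-formula `F` to "F(z, t)" over the parameters `(c, t)`. -/
noncomputable def lift2I (F : L.Formula (Fin k ⊕ Fin 2)) :
    L.Formula ((Fin k ⊕ Fin 1) ⊕ Fin 1) :=
  app2g F Sum.inl ![Sum.inr 0, Sum.inl (Sum.inr 0)]

lemma realize_lift2I {c : Fin k → M} {F : L.Formula (Fin k ⊕ Fin 2)} {t z : M} :
    (lift2I F).Realize (Sum.elim (Sum.elim c fun _ => t) fun _ => z) ↔ real2 L c F z t := by
  simp only [lift2I, real2, realize_app2g, Matrix.cons_val_zero, Matrix.cons_val_one,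
    Matrix.head_cons, Sum.elim_inl, Sum.elim_inr]

/-- Lift a 1-variable `c`-formula to the context with parameters `Fin (k+1)`. -/
noncomputable def liftS (γ : L.Formula (Fin k ⊕ Fin 1)) : L.Formula (Fin (k + 1) ⊕ Fin 1) :=
  app1g γ Fin.castSucc (Sum.inr 0)

lemma realize_liftS {c : Fin k → M} {γ : L.Formula (Fin k ⊕ Fin 1)} {t z : M} :
    (liftS γ).Realize (Sum.elim (Fin.snoc c t) fun _ => z) ↔ r1 c γ z := by
  simp only [liftS, r1, realize_app1g, Sum.elim_inl, Sum.elim_inr, Fin.snoc_castSucc]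

/-- Lift a 1-variable `c`-formula to the context with parameters `Fin (k+2)`. -/
noncomputable def liftS2 (γ : L.Formula (Fin k ⊕ Fin 1)) : L.Formula (Fin (k + 2) ⊕ Fin 1) :=
  app1g γ (fun i => i.castSucc.castSucc) (Sum.inr 0)

lemma realize_liftS2 {c : Fin k → M} {γ : L.Formula (Fin k ⊕ Fin 1)} {t s z : M} :
    (liftS2 γ).Realize (Sum.elim (Fin.snoc (Fin.snoc c t) s) fun _ => z) ↔ r1 c γ z := by
  simp only [liftS2, r1, realize_app1g, Sum.elim_inl, Sum.elim_inr, Fin.snoc_castSucc]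

end Formulas

section Saturation
variable {L : FirstOrder.Language.{u, v}} [IsOrdered L]
variable {M : Type w} [L.Structure M] [LinearOrder M] [L.OrderedStructure M]
variable {k : ℕ} {c : Fin k → M} {a₀ : M} {θ : L.Formula (Fin k ⊕ Fin 1)}

@[simp] lemma snoc_comp_castSucc {X : Type*} {n : ℕ} {c : Fin n → X} {t : X} :
    (fun i : Fin n => (Fin.snoc c t : Fin (n + 1) → X) i.castSucc) = c := by
  funext i
  simp

@[simp] lemma snoc_comp_castSucc2 {X : Type*} {n : ℕ} {c : Fin n → X} {t s : X} :
    (fun i : Fin n =>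
      (Fin.snoc (Fin.snoc c t) s : Fin (n + 2) → X) i.castSucc.castSucc) = c := by
  funext i
  simp

lemma transfer_p {y y' : M} (hy : y ∈ pSet L c a₀) (hy' : y' ∈ pSet L c a₀)
    (F : L.Formula (Fin k ⊕ Fin 1)) (h : r1 c F y) : r1 c F y' :=
  (transfer1 hy' F).2 ((transfer1 hy F).1 h)

open scoped Classical in
/-- Choose `p`-preimages of a list of formulas under a lifting map `f`. -/
noncomputable def chooseP (c : Fin k → M) (a₀ : M) {X : Type x}
    (f : L.Formula (Fin k ⊕ Fin 1) → L.Formula X) (l : List (L.Formula X)) :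
    List (L.Formula (Fin k ⊕ Fin 1)) :=
  l.filterMap (fun φ => if h : ∃ γ, pFor c a₀ γ ∧ f γ = φ then some h.choose else none)

lemma chooseP_pFor {X : Type x} {f : L.Formula (Fin k ⊕ Fin 1) → L.Formula X}
    {l : List (L.Formula X)} : ∀ γ' ∈ chooseP c a₀ f l, pFor c a₀ γ' := by
  intro γ' hγ'
  rw [chooseP, List.mem_filterMap] at hγ'
  obtain ⟨φ, _, hsome⟩ := hγ'
  by_cases h : ∃ γ, pFor c a₀ γ ∧ f γ = φ
  · rw [dif_pos h] at hsome
    rw [← Option.some_inj.1 hsome]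
    exact h.choose_spec.1
  · rw [dif_neg h] at hsome
    exact absurd hsome (by simp)

lemma realize_of_chooseP {X : Type x} {f : L.Formula (Fin k ⊕ Fin 1) → L.Formula X}
    {l : List (L.Formula X)} {φ : L.Formula X} {v : X → M}
    (hφl : φ ∈ l) (hex : ∃ γ, pFor c a₀ γ ∧ f γ = φ)
    (hsat : ∀ γ' ∈ chooseP c a₀ f l, (f γ').Realize v) : φ.Realize v := by
  have hmem : hex.choose ∈ chooseP c a₀ f l :=
    List.mem_filterMap.2 ⟨φ, hφl, by rw [dif_pos hex]⟩
  have := hsat _ hmem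
  rwa [hex.choose_spec.2] at this

lemma pFor_conjList {l : List (L.Formula (Fin k ⊕ Fin 1))}
    (h : ∀ γ ∈ l, pFor c a₀ γ) : pFor c a₀ (conjList l) := by
  rw [pFor, r1, realize_conjList]
  exact h

lemma r1_conjList_elem {l : List (L.Formula (Fin k ⊕ Fin 1))} {g : M}
    (h : r1 c (conjList l) g) {γ : L.Formula (Fin k ⊕ Fin 1)} (hγ : γ ∈ l) : r1 c γ g := by
  rw [r1, realize_conjList] at h
  exact h γ hγ

/-- Generic one-step saturation over the parameters `(c, y)`: realize all of `p`
together with one extra formula `E`. -/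
lemma sat_one (hMsat : OmegaSaturated L M) {y : M} (E : L.Formula (Fin (k + 1) ⊕ Fin 1))
    (hlb : ∀ γ : L.Formula (Fin k ⊕ Fin 1), pFor c a₀ γ →
      ∃ g, r1 c γ g ∧ E.Realize (Sum.elim (Fin.snoc c y) fun _ => g)) :
    ∃ g, g ∈ pSet L c a₀ ∧ E.Realize (Sum.elim (Fin.snoc c y) fun _ => g) := by
  set S : Set (L.Formula (Fin (k + 1) ⊕ Fin 1)) :=
    (fun γ => liftS γ) '' {γ | pFor c a₀ γ} ∪ {E} with hS
  have hfin : ∀ S₀ : Finset (L.Formula (Fin (k + 1) ⊕ Fin 1)), ↑S₀ ⊆ S →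
      ∃ a : M, ∀ φ ∈ S₀, Formula.Realize φ (Sum.elim (Fin.snoc c y) fun _ => a) := by
    intro S₀ hS₀
    set l := S₀.toList with hl
    set δstar := conjList (chooseP c a₀ (liftS (L := L)) l) with hδ
    have hpδ : pFor c a₀ δstar := pFor_conjList chooseP_pFor
    obtain ⟨g, hgδ, hgE⟩ := hlb δstar hpδ
    refine ⟨g, fun φ hφ => ?_⟩
    rcases hS₀ hφ with himg | hE
    · obtain ⟨γ, hγp, hfγ⟩ := himg
      refine realize_of_chooseP (Finset.mem_toList.2 hφ) ⟨γ, hγp, hfγ⟩ (fun γ' hγ' => ?_)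
      rw [realize_liftS]
      exact r1_conjList_elem hgδ hγ'
    · rw [Set.mem_singleton_iff] at hE
      rw [hE]
      exact hgE
  obtain ⟨g, hg⟩ := hMsat (k + 1) (Fin.snoc c y) S hfin
  refine ⟨g, pmem_of_allp (fun γ hγ => ?_), hg E (Or.inr rfl)⟩
  have := hg (liftS γ) (Or.inl ⟨γ, hγ, rfl⟩)
  rwa [realize_liftS] at this

lemma sat_below (hMsat : OmegaSaturated L M) {y : M}
    (hlb : ∀ γ : L.Formula (Fin k ⊕ Fin 1), pFor c a₀ γ → ∃ g, r1 c γ g ∧ g < y) :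
    ∃ g, g ∈ pSet L c a₀ ∧ g < y := by
  obtain ⟨g, hg, hE⟩ := sat_one hMsat
    (ltg (Sum.inr (0 : Fin 1)) (Sum.inl (Fin.last k)))
    (fun γ hγ => by
      obtain ⟨g, h1, h2⟩ := hlb γ hγ
      exact ⟨g, h1, by rw [realize_ltg]; simpa [Fin.snoc_last] using h2⟩)
  rw [realize_ltg] at hE
  exact ⟨g, hg, by simpa [Fin.snoc_last] using hE⟩

/-- The "above the `ψ₀`-class of `y`" formula over parameters `(c, y)`. -/
noncomputable def FAbove (ψ₀ : L.Formula (Fin k ⊕ Fin 2)) : L.Formula (Fin (k + 1) ⊕ Fin 1) :=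
  quantA (app2g ψ₀ Fin.castSucc ![Sum.inr (Fin.last 1), Sum.inl (Fin.last k)] ⟹
    ltg (Sum.inr (Fin.last 1)) (Sum.inr ((0 : Fin 1).castSucc)))

lemma realize_FAbove {ψ₀ : L.Formula (Fin k ⊕ Fin 2)} {y g : M} :
    (FAbove ψ₀).Realize (Sum.elim (Fin.snoc c y) fun _ => g) ↔
      ∀ u, real2 L c ψ₀ u y → u < g := by
  simp only [FAbove, real2, Formula.realize_imp, realize_app2g, realize_ltg, realize_quantA,
    extV_inl, extV_castSucc, extV_last, Matrix.cons_val_zero, Matrix.cons_val_one,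
    Matrix.head_cons, Sum.elim_inl, Sum.elim_inr, Fin.snoc_last,
    snoc_comp_castSucc, snoc_comp_castSucc2]

lemma sat_above (hMsat : OmegaSaturated L M) {y : M} {ψ₀ : L.Formula (Fin k ⊕ Fin 2)}
    (hub : ∀ γ : L.Formula (Fin k ⊕ Fin 1), pFor c a₀ γ → ∃ g, r1 c γ g ∧ ∀ u, real2 L c ψ₀ u y → u < g) :
    ∃ g, g ∈ pSet L c a₀ ∧ ∀ u, real2 L c ψ₀ u y → u < g := by
  obtain ⟨g, hg, hE⟩ := sat_one hMsat (FAbove ψ₀)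
    (fun γ hγ => by
      obtain ⟨g, h1, h2⟩ := hub γ hγ
      exact ⟨g, h1, realize_FAbove.2 h2⟩)
  exact ⟨g, hg, realize_FAbove.1 hE⟩

end Saturation

section Delta
variable {L : FirstOrder.Language.{u, v}} [IsOrdered L]
variable {M : Type w} [L.Structure M] [LinearOrder M] [L.OrderedStructure M]
variable {k : ℕ} {c : Fin k → M} {a₀ : M} {θ : L.Formula (Fin k ⊕ Fin 1)}

/-- The semantic convexity-transfer property at `α`. -/
def Dsem (c : Fin k → M) (θ δ : L.Formula (Fin k ⊕ Fin 1)) (ψ : L.Formula (Fin k ⊕ Fin 2))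
    (α : M) : Prop :=
  ∀ a b u : M, (r1 c δ a ∧ Th c θ a ∧ real2 L c ψ a α) →
    (r1 c δ b ∧ Th c θ b ∧ real2 L c ψ b α) →
    a ≤ u → u ≤ b → (Th c θ u ∧ real2 L c ψ u α)

lemma Dsem_iff_FD {δ : L.Formula (Fin k ⊕ Fin 1)} {ψ : L.Formula (Fin k ⊕ Fin 2)} {α : M} :
    r1 c (FD θ δ ψ) α ↔ Dsem c θ δ ψ α := realize_FD

/-- "ψ(x, t)" over parameters `(c, t)`. -/
noncomputable def FPsiAt (ψ : L.Formula (Fin k ⊕ Fin 2)) : L.Formula (Fin (k + 1) ⊕ Fin 1) :=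
  app2g ψ Fin.castSucc ![Sum.inr 0, Sum.inl (Fin.last k)]

lemma realize_FPsiAt {ψ : L.Formula (Fin k ⊕ Fin 2)} {t x : M} :
    (FPsiAt ψ).Realize (Sum.elim (Fin.snoc c t) fun _ => x) ↔ real2 L c ψ x t := by
  simp only [FPsiAt, real2, realize_app2g, Matrix.cons_val_zero, Matrix.cons_val_one,
    Matrix.head_cons, Sum.elim_inl, Sum.elim_inr, Fin.snoc_castSucc, Fin.snoc_last, snoc_comp_castSucc, snoc_comp_castSucc2]

/-- "ψ(x, t)" over parameters `(c, t, s)`. -/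
noncomputable def FPsiAt2 (ψ : L.Formula (Fin k ⊕ Fin 2)) : L.Formula (Fin (k + 2) ⊕ Fin 1) :=
  app2g ψ (fun i => i.castSucc.castSucc) ![Sum.inr 0, Sum.inl ((Fin.last k).castSucc)]

lemma realize_FPsiAt2 {ψ : L.Formula (Fin k ⊕ Fin 2)} {t s x : M} :
    (FPsiAt2 ψ).Realize (Sum.elim (Fin.snoc (Fin.snoc c t) s) fun _ => x) ↔
      real2 L c ψ x t := by
  simp only [FPsiAt2, real2, realize_app2g, Matrix.cons_val_zero, Matrix.cons_val_one,
    Matrix.head_cons, Sum.elim_inl, Sum.elim_inr, Fin.snoc_castSucc, Fin.snoc_last, snoc_comp_castSucc, snoc_comp_castSucc2]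

/-- The formula `H_δ(x)`: "∃ b u, δθψ(b,t) ∧ x ≤ u ≤ b ∧ ¬(θ(u) ∧ ψ(u,t))" over `(c,t)`. -/
noncomputable def Hform (θ δ : L.Formula (Fin k ⊕ Fin 1)) (ψ : L.Formula (Fin k ⊕ Fin 2)) :
    L.Formula (Fin (k + 1) ⊕ Fin 1) :=
  quantE (quantE (
    ((app1g δ Fin.castSucc (Sum.inr ((Fin.last 1).castSucc)) ⊓
      app1g θ Fin.castSucc (Sum.inr ((Fin.last 1).castSucc)) ⊓
      app2g ψ Fin.castSucc ![Sum.inr ((Fin.last 1).castSucc), Sum.inl (Fin.last k)]) ⊓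
     (leg (Sum.inr (((0 : Fin 1).castSucc).castSucc)) (Sum.inr (Fin.last 2)) ⊓
      leg (Sum.inr (Fin.last 2)) (Sum.inr ((Fin.last 1).castSucc)))) ⊓
    Formula.not (app1g θ Fin.castSucc (Sum.inr (Fin.last 2)) ⊓
      app2g ψ Fin.castSucc ![Sum.inr (Fin.last 2), Sum.inl (Fin.last k)])))

lemma realize_Hform {θ δ : L.Formula (Fin k ⊕ Fin 1)} {ψ : L.Formula (Fin k ⊕ Fin 2)}
    {t x : M} :
    (Hform θ δ ψ).Realize (Sum.elim (Fin.snoc c t) fun _ => x) ↔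
      ∃ b u : M, (r1 c δ b ∧ Th c θ b ∧ real2 L c ψ b t) ∧ (x ≤ u ∧ u ≤ b) ∧
        ¬(Th c θ u ∧ real2 L c ψ u t) := by
  simp only [Hform, r1, real2, Th, Formula.realize_inf, Formula.realize_not, realize_app2g,
    realize_app1g, realize_leg, realize_quantE, extV_inl, extV_castSucc, extV_last,
    Matrix.cons_val_zero, Matrix.cons_val_one, Matrix.head_cons, Sum.elim_inl, Sum.elim_inr,
    Fin.snoc_last, snoc_comp_castSucc, snoc_comp_castSucc2]
  constructor
  · rintro ⟨b, u, ⟨⟨⟨⟨hd, ht⟩, hp⟩, h2⟩, h3⟩⟩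
    exact ⟨b, u, ⟨hd, ht, hp⟩, h2, h3⟩
  · rintro ⟨b, u, ⟨hd, ht, hp⟩, h2, h3⟩
    exact ⟨b, u, ⟨⟨⟨hd, ht⟩, hp⟩, h2⟩, h3⟩

/-- The formula "∃ u, s ≤ u ≤ x ∧ ¬(θ(u) ∧ ψ(u,t))" over parameters `(c, t, s)`. -/
noncomputable def E2form (θ : L.Formula (Fin k ⊕ Fin 1)) (ψ : L.Formula (Fin k ⊕ Fin 2)) :
    L.Formula (Fin (k + 2) ⊕ Fin 1) :=
  quantE ((leg (Sum.inl (Fin.last (k + 1))) (Sum.inr (Fin.last 1)) ⊓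
    leg (Sum.inr (Fin.last 1)) (Sum.inr ((0 : Fin 1).castSucc))) ⊓
    Formula.not (app1g θ (fun i => i.castSucc.castSucc) (Sum.inr (Fin.last 1)) ⊓
      app2g ψ (fun i => i.castSucc.castSucc)
        ![Sum.inr (Fin.last 1), Sum.inl ((Fin.last k).castSucc)]))

lemma realize_E2form {ψ : L.Formula (Fin k ⊕ Fin 2)} {t s x : M} :
    (E2form θ ψ).Realize (Sum.elim (Fin.snoc (Fin.snoc c t) s) fun _ => x) ↔
      ∃ u : M, (s ≤ u ∧ u ≤ x) ∧ ¬(Th c θ u ∧ real2 L c ψ u t) := by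
  simp only [E2form, r1, real2, Th, Formula.realize_inf, Formula.realize_not, realize_app2g,
    realize_app1g, realize_leg, realize_quantE, extV_inl, extV_castSucc, extV_last,
    Matrix.cons_val_zero, Matrix.cons_val_one, Matrix.head_cons, Sum.elim_inl, Sum.elim_inr,
    Fin.snoc_castSucc, Fin.snoc_last, snoc_comp_castSucc, snoc_comp_castSucc2]

/-- Key lemma: for each `ψ ∈ CRF(p)` there is `δ ∈ p` such that the convexity-transfer
property `Dsem` holds at every realization of `p`. -/
lemma exists_delta (hMsat : OmegaSaturated L M) (hθw : ThetaWitness L c a₀ θ)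
    {ψ : L.Formula (Fin k ⊕ Fin 2)} (hψ : ψ ∈ CRF L c a₀) :
    ∃ δ : L.Formula (Fin k ⊕ Fin 1), pFor c a₀ δ ∧
      ∀ y ∈ pSet L c a₀, Dsem c θ δ ψ y := by
  obtain ⟨αw, hαw, hconv, hself, hright⟩ := hψ.2
  suffices hD : ∃ δ : L.Formula (Fin k ⊕ Fin 1), pFor c a₀ δ ∧ Dsem c θ δ ψ αw by
    obtain ⟨δ, hδ, hDw⟩ := hD
    exact ⟨δ, hδ, fun y hy => Dsem_iff_FD.1 (transfer_p hαw hy _ (Dsem_iff_FD.2 hDw))⟩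
  by_contra hno
  have hwit : ∀ δ : L.Formula (Fin k ⊕ Fin 1), pFor c a₀ δ →
      ∃ a b u : M, (r1 c δ a ∧ Th c θ a ∧ real2 L c ψ a αw) ∧
        (r1 c δ b ∧ Th c θ b ∧ real2 L c ψ b αw) ∧ a ≤ u ∧ u ≤ b ∧
        ¬(Th c θ u ∧ real2 L c ψ u αw) := by
    intro δ hδ
    have hnd : ¬ Dsem c θ δ ψ αw := fun hd => hno ⟨δ, hδ, hd⟩
    simp only [Dsem, not_forall] at hnd
    obtain ⟨a, b, u, ha, hb, hau, hub, hC⟩ := hnd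
    exact ⟨a, b, u, ha, hb, hau, hub, hC⟩
  -- Step 1: realize `a*`
  have hfin₁ : ∀ S₀ : Finset (L.Formula (Fin (k + 1) ⊕ Fin 1)),
      ↑S₀ ⊆ ((fun γ => liftS γ) '' {γ | pFor c a₀ γ} ∪
        (fun δ => Hform θ δ ψ) '' {γ | pFor c a₀ γ} ∪ {FPsiAt ψ}) →
      ∃ a : M, ∀ φ ∈ S₀, Formula.Realize φ (Sum.elim (Fin.snoc c αw) fun _ => a) := by
    intro S₀ hS₀
    set l := S₀.toList with hl
    set δstar := conjList (chooseP c a₀ (liftS (L := L)) l ++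
      chooseP c a₀ (fun δ => Hform θ δ ψ) l) with hδ
    have hpδ : pFor c a₀ δstar := by
      refine pFor_conjList (fun γ hγ => ?_)
      rcases List.mem_append.1 hγ with h | h
      · exact chooseP_pFor γ h
      · exact chooseP_pFor γ h
    obtain ⟨a, b, u, ⟨hδa, hTa, hψa⟩, ⟨hδb, hTb, hψb⟩, hau, hub, hC⟩ := hwit δstar hpδ
    refine ⟨a, fun φ hφ => ?_⟩
    rcases hS₀ hφ with (himg | himg) | hE
    · obtain ⟨γ, hγp, hfγ⟩ := himg
      refine realize_of_chooseP (Finset.mem_toList.2 hφ) ⟨γ, hγp, hfγ⟩ (fun γ' hγ' => ?_)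
      rw [realize_liftS]
      exact r1_conjList_elem hδa (List.mem_append.2 (Or.inl hγ'))
    · obtain ⟨δ', hδ'p, hfδ'⟩ := himg
      refine realize_of_chooseP (f := fun δ => Hform θ δ ψ) (Finset.mem_toList.2 hφ) ⟨δ', hδ'p, hfδ'⟩ (fun δ'' hδ'' => ?_)
      rw [realize_Hform]
      exact ⟨b, u, ⟨r1_conjList_elem hδb (List.mem_append.2 (Or.inr hδ'')), hTb, hψb⟩,
        ⟨hau, hub⟩, hC⟩
    · rw [Set.mem_singleton_iff] at hE
      rw [hE, realize_FPsiAt]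
      exact hψa
  obtain ⟨astar, hastar⟩ := hMsat (k + 1) (Fin.snoc c αw) _ hfin₁
  have hpa : astar ∈ pSet L c a₀ := by
    refine pmem_of_allp (fun γ hγ => ?_)
    have := hastar (liftS γ) (Or.inl (Or.inl ⟨γ, hγ, rfl⟩))
    rwa [realize_liftS] at this
  have hψastar : real2 L c ψ astar αw := by
    have := hastar (FPsiAt ψ) (Or.inr rfl)
    rwa [realize_FPsiAt] at this
  have hH : ∀ δ : L.Formula (Fin k ⊕ Fin 1), pFor c a₀ δ →
      ∃ b u : M, (r1 c δ b ∧ Th c θ b ∧ real2 L c ψ b αw) ∧ (astar ≤ u ∧ u ≤ b) ∧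
        ¬(Th c θ u ∧ real2 L c ψ u αw) := by
    intro δ hδ
    have := hastar (Hform θ δ ψ) (Or.inl (Or.inr ⟨δ, hδ, rfl⟩))
    rwa [realize_Hform] at this
  -- Step 2: realize `b*`
  have hfin₂ : ∀ S₀ : Finset (L.Formula (Fin (k + 2) ⊕ Fin 1)),
      ↑S₀ ⊆ ((fun γ => liftS2 γ) '' {γ | pFor c a₀ γ} ∪ {FPsiAt2 ψ, E2form θ ψ}) →
      ∃ b : M, ∀ φ ∈ S₀,
        Formula.Realize φ (Sum.elim (Fin.snoc (Fin.snoc c αw) astar) fun _ => b) := by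
    intro S₀ hS₀
    set l := S₀.toList with hl
    set δstar := conjList (chooseP c a₀ (liftS2 (L := L)) l) with hδ
    have hpδ : pFor c a₀ δstar := pFor_conjList chooseP_pFor
    obtain ⟨b, u, ⟨hδb, hTb, hψb⟩, ⟨hau, hub⟩, hC⟩ := hH δstar hpδ
    refine ⟨b, fun φ hφ => ?_⟩
    rcases hS₀ hφ with himg | hE
    · obtain ⟨γ, hγp, hfγ⟩ := himg
      refine realize_of_chooseP (Finset.mem_toList.2 hφ) ⟨γ, hγp, hfγ⟩ (fun γ' hγ' => ?_)
      rw [realize_liftS2]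
      exact r1_conjList_elem hδb hγ'
    · rcases hE with hE | hE
      · rw [hE, realize_FPsiAt2]
        exact hψb
      · rw [Set.mem_singleton_iff] at hE
        rw [hE, realize_E2form]
        exact ⟨u, ⟨hau, hub⟩, hC⟩
  obtain ⟨bstar, hbstar⟩ := hMsat (k + 2) (Fin.snoc (Fin.snoc c αw) astar) _ hfin₂
  have hpb : bstar ∈ pSet L c a₀ := by
    refine pmem_of_allp (fun γ hγ => ?_)
    have := hbstar (liftS2 γ) (Or.inl ⟨γ, hγ, rfl⟩)
    rwa [realize_liftS2] at this
  have hψbstar : real2 L c ψ bstar αw := by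
    have := hbstar (FPsiAt2 ψ) (Or.inr (Or.inl rfl))
    rwa [realize_FPsiAt2] at this
  obtain ⟨u, ⟨hau, hub⟩, hC⟩ := by
    have := hbstar (E2form θ ψ) (Or.inr (Or.inr rfl))
    rwa [realize_E2form] at this
  have humem : u ∈ pSet L c a₀ ∩ phiSet L c ψ αw :=
    hconv astar ⟨hpa, hψastar⟩ bstar ⟨hpb, hψbstar⟩ u (Set.mem_univ u) hau hub
  exact hC ⟨Th_of_pmem hθw humem.1, humem.2⟩

end Delta

section CRFfacts
variable {L : FirstOrder.Language.{u, v}} [IsOrdered L]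
variable {M : Type w} [L.Structure M] [LinearOrder M] [L.OrderedStructure M]
variable {k : ℕ} {c : Fin k → M} {a₀ : M} {θ : L.Formula (Fin k ⊕ Fin 1)}

/-- "ψ(y, x)": the swap of a 2-variable formula. -/
noncomputable def swap2 (ψ : L.Formula (Fin k ⊕ Fin 2)) : L.Formula (Fin k ⊕ Fin 2) :=
  app2g ψ id ![Sum.inr 1, Sum.inr 0]

lemma realize_swap2 {ψ : L.Formula (Fin k ⊕ Fin 2)} {x y : M} :
    real2 L c (swap2 ψ) x y ↔ real2 L c ψ y x := by
  simp only [swap2, real2, realize_app2g, Matrix.cons_val_zero, Matrix.cons_val_one,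
    Matrix.head_cons, Sum.elim_inl, Sum.elim_inr, id]

/-- Every formula in `CRF(p)` is reflexive on `p` and has its parameter as left endpoint,
at every realization of `p`. -/
lemma T1_of_CRF {ψ : L.Formula (Fin k ⊕ Fin 2)} (hψ : ψ ∈ CRF L c a₀) {y : M}
    (hy : y ∈ pSet L c a₀) :
    real2 L c ψ y y ∧ ∀ z, real2 L c ψ z y → y ≤ z := by
  obtain ⟨αw, hαw, _, hself, hright⟩ := hψ.2
  exact realize_FT1.1 (transfer_p hαw hy (FT1 ψ) (realize_FT1.2 ⟨hself, hright⟩))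

/-- Bounds above the `ψ₀`-class, at every realization of `p`, for every `γ ∈ p`. -/
lemma UB_of_CRF (hθw : ThetaWitness L c a₀ θ) {ψ₀ : L.Formula (Fin k ⊕ Fin 2)}
    (hψ₀ : ψ₀ ∈ CRF L c a₀) {y : M} (hy : y ∈ pSet L c a₀)
    {γ : L.Formula (Fin k ⊕ Fin 1)} (hγ : pFor c a₀ γ) :
    ∃ g, r1 c γ g ∧ Th c θ g ∧ ∀ u, real2 L c ψ₀ u y → u < g := by
  obtain ⟨αP, hαP, γ₁', hγ₁', γ₂', hγ₂', _, hbd⟩ := hψ₀.1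
  refine realize_FUB.1 (transfer_p hαP hy (FUB θ γ ψ₀) (realize_FUB.2 ?_))
  exact ⟨γ₂', r1_of_pFor hγ₂' hγ, Th_of_pmem hθw hγ₂', fun u hu => (hbd u hu).2⟩

/-- Elements of (approximately) `p` below `y`, at every realization `y` of `p`. -/
lemma LB_of_CRF (hθw : ThetaWitness L c a₀ θ) {ψ₀ : L.Formula (Fin k ⊕ Fin 2)}
    (hψ₀ : ψ₀ ∈ CRF L c a₀) {y : M} (hy : y ∈ pSet L c a₀)
    {γ : L.Formula (Fin k ⊕ Fin 1)} (hγ : pFor c a₀ γ) :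
    ∃ g, r1 c γ g ∧ Th c θ g ∧ g < y := by
  obtain ⟨αP, hαP, γ₁', hγ₁', γ₂', hγ₂', _, hbd⟩ := hψ₀.1
  refine realize_FLB.1 (transfer_p hαP hy (FLB θ γ) (realize_FLB.2 ?_))
  refine ⟨γ₁', r1_of_pFor hγ₁' hγ, Th_of_pmem hθw hγ₁', ?_⟩
  exact (hbd αP (T1_of_CRF hψ₀ hαP).1).1

lemma exists_pmem_below (hMsat : OmegaSaturated L M) (hθw : ThetaWitness L c a₀ θ)
    {ψ₀ : L.Formula (Fin k ⊕ Fin 2)} (hψ₀ : ψ₀ ∈ CRF L c a₀) {y : M}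
    (hy : y ∈ pSet L c a₀) : ∃ g, g ∈ pSet L c a₀ ∧ g < y :=
  sat_below hMsat (fun γ hγ => by
    obtain ⟨g, h1, _, h3⟩ := LB_of_CRF hθw hψ₀ hy hγ
    exact ⟨g, h1, h3⟩)

lemma exists_pmem_above (hMsat : OmegaSaturated L M) (hθw : ThetaWitness L c a₀ θ)
    {ψ₀ : L.Formula (Fin k ⊕ Fin 2)} (hψ₀ : ψ₀ ∈ CRF L c a₀) {y : M}
    (hy : y ∈ pSet L c a₀) :
    ∃ g, g ∈ pSet L c a₀ ∧ ∀ u, real2 L c ψ₀ u y → u < g :=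
  sat_above hMsat (fun γ hγ => by
    obtain ⟨g, h1, _, h3⟩ := UB_of_CRF hθw hψ₀ hy hγ
    exact ⟨g, h1, h3⟩)

end CRFfacts

section Cases
variable {L : FirstOrder.Language.{u, v}} [IsOrdered L]
variable {M : Type w} [L.Structure M] [LinearOrder M] [L.OrderedStructure M]
variable {k : ℕ} {c : Fin k → M} {a₀ : M} {θ : L.Formula (Fin k ⊕ Fin 1)}

lemma real2_sup {F G : L.Formula (Fin k ⊕ Fin 2)} {x y : M} :
    real2 L c (F ⊔ G) x y ↔ real2 L c F x y ∨ real2 L c G x y := Formula.realize_sup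

/-- Case A: `α₁ < α₂`. -/
lemma caseA (hMsat : OmegaSaturated L M) (hθw : ThetaWitness L c a₀ θ)
    {ψ₀ : L.Formula (Fin k ⊕ Fin 2)} (hψ₀ : ψ₀ ∈ CRF L c a₀)
    {α₁ α₂ : M} (h₁ : α₁ ∈ pSet L c a₀) (h₂ : α₂ ∈ pSet L c a₀) (hlt : α₁ < α₂)
    {χ : L.Formula ((Fin k ⊕ Fin 1) ⊕ Fin 1)} (hχ : real2 L c (chi2 χ) α₂ α₁)
    (hiso : ∀ z, real2 L c (chi2 χ) z α₁ →
      tp1 L (Sum.elim c fun _ : Fin 1 => α₁) z = tp1 L (Sum.elim c fun _ : Fin 1 => α₁) α₂)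
    (hker : ∀ φ ∈ CRF L c a₀, real2 L c φ α₁ α₂ ∨ real2 L c φ α₂ α₁) :
    HasLeastCRF L c a₀ := by
  have hzr : ∀ z, real2 L c (chi2 χ) z α₁ →
      ∀ F : L.Formula (Fin k ⊕ Fin 2), (real2 L c F z α₁ ↔ real2 L c F α₂ α₁) := by
    intro z hz F
    have hset := Set.ext_iff.1 (hiso z hz) (lift2I F)
    simpa only [tp1, Set.mem_setOf_eq, realize_lift2I] using hset
  have hzr1 : ∀ z, real2 L c (chi2 χ) z α₁ →
      ∀ γ : L.Formula (Fin k ⊕ Fin 1), (r1 c γ z ↔ r1 c γ α₂) := by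
    intro z hz γ
    have hset := Set.ext_iff.1 (hiso z hz) (liftI γ)
    simpa only [tp1, Set.mem_setOf_eq, realize_liftI] using hset
  have hψ₀21 : real2 L c ψ₀ α₂ α₁ := by
    rcases hker ψ₀ hψ₀ with h | h
    · exact absurd ((T1_of_CRF hψ₀ h₂).2 α₁ h) (not_le.2 hlt)
    · exact h
  set ξ := chiA (chi2 χ) ψ₀ θ with hξdef
  have hξ21 : real2 L c ξ α₂ α₁ :=
    realize_chiA.2 ⟨hχ, hlt, Th_of_pmem hθw h₂, hψ₀21⟩
  have hMemA : ∀ γ : L.Formula (Fin k ⊕ Fin 1), pFor c a₀ γ → r1 c (FMem ξ γ) α₁ := by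
    intro γ hγ
    refine realize_FMem.2 (fun z hzξ => ?_)
    exact (hzr1 z (realize_chiA.1 hzξ).1 γ).2 (r1_of_pFor h₂ hγ)
  have hEpsA : ∀ ψ ∈ CRF L c a₀, r1 c (FEps ξ ψ) α₁ := by
    intro ψ hψ
    refine realize_FEps.2 (fun z hzξ => ?_)
    have hz := (realize_chiA.1 hzξ).1
    have h2' : real2 L c (swap2 ψ ⊔ ψ) α₂ α₁ := by
      refine real2_sup.2 ?_
      rcases hker ψ hψ with h | h
      · exact Or.inl (realize_swap2.2 h)
      · exact Or.inr h
    rcases real2_sup.1 ((hzr z hz (swap2 ψ ⊔ ψ)).2 h2') with h | h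
    · exact Or.inl (realize_swap2.1 h)
    · exact Or.inr h
  have hwmem : ∀ α ∈ pSet L c a₀, ∀ w, real2 L c ξ w α → w ∈ pSet L c a₀ := by
    intro α hα w hw
    refine pmem_of_allp (fun γ hγ => ?_)
    exact realize_FMem.1 (transfer_p h₁ hα _ (hMemA γ hγ)) w hw
  have hwpsi : ∀ ψ ∈ CRF L c a₀, ∀ α ∈ pSet L c a₀, ∀ w,
      real2 L c ξ w α → real2 L c ψ w α := by
    intro ψ hψ α hα w hw
    obtain ⟨_, hαw, _, _⟩ := realize_chiA.1 hw
    rcases realize_FEps.1 (transfer_p h₁ hα _ (hEpsA ψ hψ)) w hw with h | h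
    · exact absurd ((T1_of_CRF hψ (hwmem α hα w hw)).2 α h) (not_le.2 hαw)
    · exact h
  obtain ⟨δ₀, hδ₀p, hD₀⟩ := exists_delta hMsat hθw hψ₀
  obtain ⟨γ₁, hγ₁p, hγ₁lt⟩ := exists_pmem_below hMsat hθw hψ₀ h₁
  obtain ⟨γ₂, hγ₂p, hγ₂gt⟩ := exists_pmem_above hMsat hθw hψ₀ h₁
  have hphi_self : real2 L c (phiA ξ) α₁ α₁ :=
    realize_phiA.2 ⟨le_refl _, α₂, hξ21, le_of_lt hlt⟩
  have hfact : ∀ a, real2 L c (phiA ξ) a α₁ → a ∈ pSet L c a₀ →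
      Th c θ a ∧ real2 L c ψ₀ a α₁ := by
    intro a ha hap
    obtain ⟨h1a, wa, hwa, hawa⟩ := realize_phiA.1 ha
    have hwap := hwmem α₁ h₁ wa hwa
    have hwψ₀ : real2 L c ψ₀ wa α₁ := (realize_chiA.1 hwa).2.2.2
    exact hD₀ α₁ h₁ α₁ wa a ⟨r1_of_pFor h₁ hδ₀p, Th_of_pmem hθw h₁, (T1_of_CRF hψ₀ h₁).1⟩
      ⟨r1_of_pFor hwap hδ₀p, Th_of_pmem hθw hwap, hwψ₀⟩ h1a hawa
  have hCRF : phiA ξ ∈ CRF L c a₀ := by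
    constructor
    · -- PPreserving
      refine ⟨α₁, h₁, γ₁, hγ₁p, γ₂, hγ₂p, ⟨α₂, h₂,
        realize_phiA.2 ⟨le_of_lt hlt, α₂, hξ21, le_refl _⟩, fun h => (ne_of_gt hlt) h⟩, ?_⟩
      intro z hz
      obtain ⟨h1z, w, hw, hzw⟩ := realize_phiA.1 hz
      exact ⟨lt_of_lt_of_le hγ₁lt h1z,
        lt_of_le_of_lt hzw (hγ₂gt w (realize_chiA.1 hw).2.2.2)⟩
    · -- ConvexRight
      refine ⟨α₁, h₁, ?_, hphi_self, fun z hz => (realize_phiA.1 hz).1⟩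
      intro a ha b hb y _ hay hyb
      obtain ⟨hap, haφ⟩ := ha
      obtain ⟨hbp, hbφ⟩ := hb
      obtain ⟨h1a, wa, hwa, hawa⟩ := realize_phiA.1 haφ
      obtain ⟨h1b, wb, hwb, hbwb⟩ := realize_phiA.1 hbφ
      have hyφ : real2 L c (phiA ξ) y α₁ :=
        realize_phiA.2 ⟨le_trans h1a hay, wb, hwb, le_trans hyb hbwb⟩
      have hTa := hfact a haφ hap
      have hTb := hfact b hbφ hbp
      have hTy : Th c θ y := (hD₀ α₁ h₁ a b y ⟨r1_of_pFor hap hδ₀p, hTa.1, hTa.2⟩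
        ⟨r1_of_pFor hbp hδ₀p, hTb.1, hTb.2⟩ hay hyb).1
      exact ⟨pmem_between hθw hap hbp hay hyb hTy, hyφ⟩
  refine ⟨phiA ξ, hCRF, ?_⟩
  intro ψ hψ α hα x hx
  obtain ⟨hxφ, hxp⟩ := hx
  obtain ⟨hαx, w, hwξ, hxw⟩ := realize_phiA.1 hxφ
  obtain ⟨δψ, hδψp, hDψ⟩ := exists_delta hMsat hθw hψ
  have hwp := hwmem α hα w hwξ
  have hwψ := hwpsi ψ hψ α hα w hwξ
  have hfin := hDψ α hα α w x
    ⟨r1_of_pFor hα hδψp, Th_of_pmem hθw hα, (T1_of_CRF hψ hα).1⟩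
    ⟨r1_of_pFor hwp hδψp, Th_of_pmem hθw hwp, hwψ⟩ hαx hxw
  exact ⟨hfin.2, hxp⟩

/-- Case B: `α₂ < α₁`. -/
lemma caseB (hMsat : OmegaSaturated L M) (hθw : ThetaWitness L c a₀ θ)
    {ψ₀ : L.Formula (Fin k ⊕ Fin 2)} (hψ₀ : ψ₀ ∈ CRF L c a₀)
    {α₁ α₂ : M} (h₁ : α₁ ∈ pSet L c a₀) (h₂ : α₂ ∈ pSet L c a₀) (hlt : α₂ < α₁)
    {χ : L.Formula ((Fin k ⊕ Fin 1) ⊕ Fin 1)} (hχ : real2 L c (chi2 χ) α₂ α₁)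
    (hiso : ∀ z, real2 L c (chi2 χ) z α₁ →
      tp1 L (Sum.elim c fun _ : Fin 1 => α₁) z = tp1 L (Sum.elim c fun _ : Fin 1 => α₁) α₂)
    (hker : ∀ φ ∈ CRF L c a₀, real2 L c φ α₁ α₂ ∨ real2 L c φ α₂ α₁) :
    HasLeastCRF L c a₀ := by
  have hzr : ∀ z, real2 L c (chi2 χ) z α₁ →
      ∀ F : L.Formula (Fin k ⊕ Fin 2), (real2 L c F z α₁ ↔ real2 L c F α₂ α₁) := by
    intro z hz F
    have hset := Set.ext_iff.1 (hiso z hz) (lift2I F)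
    simpa only [tp1, Set.mem_setOf_eq, realize_lift2I] using hset
  have hψ₀12 : real2 L c ψ₀ α₁ α₂ := by
    rcases hker ψ₀ hψ₀ with h | h
    · exact h
    · exact absurd ((T1_of_CRF hψ₀ h₁).2 α₂ h) (not_le.2 hlt)
  set ξ := chiB (chi2 χ) ψ₀ θ with hξdef
  have hξ21 : real2 L c ξ α₂ α₁ :=
    realize_chiB.2 ⟨hχ, hlt, Th_of_pmem hθw h₁, hψ₀12⟩
  have hEpsB : ∀ ψ ∈ CRF L c a₀, r1 c (FEps ξ ψ) α₁ := by
    intro ψ hψ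
    refine realize_FEps.2 (fun z hzξ => ?_)
    have hz := (realize_chiB.1 hzξ).1
    have h2' : real2 L c (swap2 ψ ⊔ ψ) α₂ α₁ := by
      refine real2_sup.2 ?_
      rcases hker ψ hψ with h | h
      · exact Or.inl (realize_swap2.2 h)
      · exact Or.inr h
    rcases real2_sup.1 ((hzr z hz (swap2 ψ ⊔ ψ)).2 h2') with h | h
    · exact Or.inl (realize_swap2.1 h)
    · exact Or.inr h
  -- realizers `w` of `ξ(α, ·)` are in `pSet`, by sandwiching
  have hwmem : ∀ α ∈ pSet L c a₀, ∀ w, real2 L c ξ α w → w ∈ pSet L c a₀ := by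
    intro α hα w hw
    obtain ⟨_, hαw, hTw, hwψ₀⟩ := realize_chiB.1 hw
    refine pmem_sandwich hθw hα (le_of_lt hαw) hTw (fun γ hγ => ?_)
    obtain ⟨g, hg1, _, hg3⟩ := UB_of_CRF hθw hψ₀ hα hγ
    exact ⟨g, hg1, le_of_lt (hg3 w hwψ₀)⟩
  have hwpsi : ∀ ψ ∈ CRF L c a₀, ∀ α ∈ pSet L c a₀, ∀ w,
      real2 L c ξ α w → real2 L c ψ w α := by
    intro ψ hψ α hα w hw
    obtain ⟨_, hαw, _, _⟩ := realize_chiB.1 hw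
    have hwp := hwmem α hα w hw
    rcases realize_FEps.1 (transfer_p h₁ hwp _ (hEpsB ψ hψ)) α hw with h | h
    · exact h
    · exact absurd ((T1_of_CRF hψ hwp).2 α h) (not_le.2 hαw)
  obtain ⟨δ₀, hδ₀p, hD₀⟩ := exists_delta hMsat hθw hψ₀
  obtain ⟨γ₁, hγ₁p, hγ₁lt⟩ := exists_pmem_below hMsat hθw hψ₀ h₂
  obtain ⟨γ₂, hγ₂p, hγ₂gt⟩ := exists_pmem_above hMsat hθw hψ₀ h₂
  have hphi_self : real2 L c (phiB ξ) α₂ α₂ :=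
    realize_phiB.2 ⟨le_refl _, α₁, hξ21, le_of_lt hlt⟩
  have hfact : ∀ a, real2 L c (phiB ξ) a α₂ → a ∈ pSet L c a₀ →
      Th c θ a ∧ real2 L c ψ₀ a α₂ := by
    intro a ha hap
    obtain ⟨h1a, wa, hwa, hawa⟩ := realize_phiB.1 ha
    have hwap := hwmem α₂ h₂ wa hwa
    have hwψ₀ : real2 L c ψ₀ wa α₂ := (realize_chiB.1 hwa).2.2.2
    exact hD₀ α₂ h₂ α₂ wa a ⟨r1_of_pFor h₂ hδ₀p, Th_of_pmem hθw h₂, (T1_of_CRF hψ₀ h₂).1⟩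
      ⟨r1_of_pFor hwap hδ₀p, Th_of_pmem hθw hwap, hwψ₀⟩ h1a hawa
  have hCRF : phiB ξ ∈ CRF L c a₀ := by
    constructor
    · refine ⟨α₂, h₂, γ₁, hγ₁p, γ₂, hγ₂p, ⟨α₁, h₁,
        realize_phiB.2 ⟨le_of_lt hlt, α₁, hξ21, le_refl _⟩, fun h => (ne_of_gt hlt) h⟩, ?_⟩
      intro z hz
      obtain ⟨h1z, w, hw, hzw⟩ := realize_phiB.1 hz
      exact ⟨lt_of_lt_of_le hγ₁lt h1z,
        lt_of_le_of_lt hzw (hγ₂gt w (realize_chiB.1 hw).2.2.2)⟩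
    · refine ⟨α₂, h₂, ?_, hphi_self, fun z hz => (realize_phiB.1 hz).1⟩
      intro a ha b hb y _ hay hyb
      obtain ⟨hap, haφ⟩ := ha
      obtain ⟨hbp, hbφ⟩ := hb
      obtain ⟨h1a, wa, hwa, hawa⟩ := realize_phiB.1 haφ
      obtain ⟨h1b, wb, hwb, hbwb⟩ := realize_phiB.1 hbφ
      have hyφ : real2 L c (phiB ξ) y α₂ :=
        realize_phiB.2 ⟨le_trans h1a hay, wb, hwb, le_trans hyb hbwb⟩
      have hTa := hfact a haφ hap
      have hTb := hfact b hbφ hbp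
      have hTy : Th c θ y := (hD₀ α₂ h₂ a b y ⟨r1_of_pFor hap hδ₀p, hTa.1, hTa.2⟩
        ⟨r1_of_pFor hbp hδ₀p, hTb.1, hTb.2⟩ hay hyb).1
      exact ⟨pmem_between hθw hap hbp hay hyb hTy, hyφ⟩
  refine ⟨phiB ξ, hCRF, ?_⟩
  intro ψ hψ α hα x hx
  obtain ⟨hxφ, hxp⟩ := hx
  obtain ⟨hαx, w, hwξ, hxw⟩ := realize_phiB.1 hxφ
  obtain ⟨δψ, hδψp, hDψ⟩ := exists_delta hMsat hθw hψ
  have hwp := hwmem α hα w hwξ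
  have hwψ := hwpsi ψ hψ α hα w hwξ
  have hfin := hDψ α hα α w x
    ⟨r1_of_pFor hα hδψp, Th_of_pmem hθw hα, (T1_of_CRF hψ hα).1⟩
    ⟨r1_of_pFor hwp hδψp, Th_of_pmem hθw hwp, hwψ⟩ hαx hxw
  exact ⟨hfin.2, hxp⟩

end Cases

/-- Lemma 9. Under the hypotheses of Theorem 7 (with `T` small), if
`α₁ ≠ α₂` are realizations of `p` with `α₂ ∈ Ker_{p(M)}(α₁)`, then `tp(α₂/α₁)` is
non-principal. -/
theorem statement_15 {L : FirstOrder.Language.{u, v}} [IsOrdered L]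
    (hL : Countable L.Symbols)
    {M : Type w} [L.Structure M] [LinearOrder M] [L.OrderedStructure M] [Nonempty M]
    (hMc : Countable M) (hMsat : OmegaSaturated L M)
    (hsmall : IsSmall L (L.completeTheory M))
    (hRestr : SatisfiesRestriction L M)
    {k : ℕ} (c : Fin k → M) (a₀ : M)
    (hnonalg : (pSet L c a₀).Infinite)
    (hinf : CRFInfinite L c a₀)
    (hnl : ¬ HasLeastCRF L c a₀)
    (θ : L.Formula (Fin k ⊕ Fin 1)) (hθ : ThetaWitness L c a₀ θ)
    (α₁ α₂ : M) (h₁ : α₁ ∈ pSet L c a₀) (h₂ : α₂ ∈ pSet L c a₀)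
    (hne : α₁ ≠ α₂) (hker : α₂ ∈ KerSet L c a₀ θ α₁) :
    ¬ IsPrincipal1 L (Sum.elim c fun _ : Fin 1 => α₁) α₂ := by
  intro hpr
  obtain ⟨χ, hχmem, hiso⟩ := hpr
  obtain ⟨g, hg⟩ := hinf.nonempty
  obtain ⟨ψ₀, hψ₀, -⟩ := hg
  have hχ2 : real2 L c (chi2 χ) α₂ α₁ := realize_chi2.2 hχmem
  have hiso' : ∀ z, real2 L c (chi2 χ) z α₁ →
      tp1 L (Sum.elim c fun _ : Fin 1 => α₁) z =
        tp1 L (Sum.elim c fun _ : Fin 1 => α₁) α₂ :=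
    fun z hz => hiso z (realize_chi2.1 hz)
  have hker2 : α₂ ∈ ⋂ φ ∈ CRF L c a₀, epsSet L c θ φ α₁ := hker
  have hker' : ∀ φ ∈ CRF L c a₀, real2 L c φ α₁ α₂ ∨ real2 L c φ α₂ α₁ :=
    fun φ hφ => (Set.mem_iInter₂.1 hker2 φ hφ).1
  rcases lt_or_gt_of_ne hne with hlt | hgt
  · exact hnl (caseA hMsat hθ hψ₀ h₁ h₂ hlt hχ2 hiso' hker')
  · exact hnl (caseB hMsat hθ hψ₀ h₁ h₂ hgt hχ2 hiso' hker')

end Paper
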